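/- arXiv:1903.11220 — 6 statements merged into one kernel-verified Lean document; each statement's English description precedes it below -/
import Mathlib

section
/- (Theorem 1, limit form.) Let d, q be positive integers, let t : ℝ^d → ℝ^q be Fréchet differentiable at a point X with derivative represented by the q × d Jacobian matrix t'(X), and let p > 1. Then the limit as δ ↓ 0 of (1/δ)·sup{ ‖t(X + Δ) − t(X)‖₁ : Δ ∈ ℝ^d, ‖Δ‖_p^p ≤ d·δ^p } exists and equals d^{1/p}·max over sign vectors σ ∈ {−1,1}^q of ‖σᵀ t'(X)‖_{p/(p−1)}. -/
open Real Set Filter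

/-- The entrywise `ℓ_p` norm of a vector in `ℝⁿ`: `(∑ i, |x i|^p)^(1/p)`. -/
noncomputable def pnorm (p : ℝ) {n : ℕ} (x : Fin n → ℝ) : ℝ := (∑ i, |x i| ^ p) ^ (1 / p)

/-- The sign vector in `{-1,1}^q` encoded by a Boolean vector. -/
def signVec {q : ℕ} (σ : Fin q → Bool) : Fin q → ℝ := fun i => if σ i then 1 else -1

lemma pnorm_nonneg (p : ℝ) {n : ℕ} (x : Fin n → ℝ) : 0 ≤ pnorm p x :=
  Real.rpow_nonneg (Finset.sum_nonneg fun _ _ => Real.rpow_nonneg (abs_nonneg _) _) _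

lemma abs_signVec {q : ℕ} (σ : Fin q → Bool) (i : Fin q) : |signVec σ i| = 1 := by
  unfold signVec; split <;> simp

lemma signVec_mul_le {q : ℕ} (σ : Fin q → Bool) (y : ℝ) (i : Fin q) :
    signVec σ i * y ≤ |y| := by
  calc signVec σ i * y ≤ |signVec σ i * y| := le_abs_self _
    _ = |y| := by rw [abs_mul, abs_signVec, one_mul]

lemma pi_norm_le_pnorm {p : ℝ} (hp : 0 < p) {n : ℕ} (x : Fin n → ℝ) :
    ‖x‖ ≤ (∑ j, |x j| ^ p) ^ (1 / p) := by
  rw [pi_norm_le_iff_of_nonneg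
    (Real.rpow_nonneg (Finset.sum_nonneg fun _ _ => Real.rpow_nonneg (abs_nonneg _) _) _)]
  intro j
  rw [Real.norm_eq_abs]
  have h1 : |x j| = (|x j| ^ p) ^ (1 / p) := by
    rw [← Real.rpow_mul (abs_nonneg _), mul_one_div_cancel hp.ne', Real.rpow_one]
  rw [h1]
  exact Real.rpow_le_rpow (Real.rpow_nonneg (abs_nonneg _) _)
    (Finset.single_le_sum (fun i _ => Real.rpow_nonneg (abs_nonneg _) _) (Finset.mem_univ j))
    (by positivity)

lemma sum_abs_le_card_norm {q : ℕ} (y : Fin q → ℝ) : ∑ i, |y i| ≤ q * ‖y‖ := by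
  calc ∑ i, |y i| ≤ ∑ _i : Fin q, ‖y‖ :=
        Finset.sum_le_sum fun i _ => by rw [← Real.norm_eq_abs]; exact norm_le_pi_norm y i
    _ = q * ‖y‖ := by simp [Finset.card_univ, mul_comm]

/-- Theorem 1, limit form: if `t : ℝ^d → ℝ^q` is Fréchet differentiable at `X`
with Jacobian matrix `J`, and `p > 1`, then
`(1/δ)·sup{ ‖t(X+Δ) − t(X)‖₁ : ‖Δ‖_p^p ≤ d·δ^p }` converges, as `δ ↓ 0`, to
`d^{1/p}·max_{σ ∈ {-1,1}^q} ‖σᵀ J‖_{p/(p-1)}`. -/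
theorem stmt3 (d q : ℕ) (hd : 0 < d) (hq : 0 < q)
    (t : (Fin d → ℝ) → (Fin q → ℝ)) (X : Fin d → ℝ) (J : Matrix (Fin q) (Fin d) ℝ)
    (ht : HasFDerivAt t (LinearMap.toContinuousLinearMap J.mulVecLin) X)
    (p : ℝ) (hp : 1 < p) :
    Tendsto
      (fun δ : ℝ => (1 / δ) *
        sSup ((fun Δ : Fin d → ℝ => ∑ i, |t (X + Δ) i - t X i|) ''
          {Δ | ∑ j, |Δ j| ^ p ≤ d * δ ^ p}))
      (nhdsWithin 0 (Set.Ioi 0))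
      (nhds ((d : ℝ) ^ (1 / p) *
        ⨆ σ : Fin q → Bool, pnorm (p / (p - 1)) (fun j => ∑ i, signVec σ i * J i j))) := by
  have hp0 : (0 : ℝ) < p := lt_trans one_pos hp
  have hpq : p.HolderConjugate (p / (p - 1)) := Real.HolderConjugate.conjExponent hp
  set p' : ℝ := p / (p - 1) with hp'def
  have hp'0 : (0 : ℝ) < p' := hpq.symm.pos
  set M : ℝ := ⨆ σ : Fin q → Bool, pnorm p' (fun j => ∑ i, signVec σ i * J i j) with hMdef
  have hM0 : 0 ≤ M := Real.iSup_nonneg fun σ => pnorm_nonneg _ _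
  have hd1 : (0 : ℝ) < (d : ℝ) ^ (1 / p) := by positivity
  -- sum swap
  have hswap : ∀ (σ : Fin q → Bool) (Δ : Fin d → ℝ),
      ∑ i, signVec σ i * J.mulVec Δ i = ∑ j, (∑ i, signVec σ i * J i j) * Δ j := by
    intro σ Δ
    simp only [Matrix.mulVec, dotProduct, Finset.mul_sum, Finset.sum_mul]
    rw [Finset.sum_comm]
    exact Finset.sum_congr rfl fun j _ => Finset.sum_congr rfl fun i _ => by ring
  -- Hölder bound
  have hHolder : ∀ Δ : Fin d → ℝ,
      ∑ i, |J.mulVec Δ i| ≤ M * (∑ j, |Δ j| ^ p) ^ (1 / p) := by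
    intro Δ
    set σ : Fin q → Bool := fun i => decide (0 ≤ J.mulVec Δ i) with hσdef
    have h1 : ∑ i, |J.mulVec Δ i| = ∑ i, signVec σ i * J.mulVec Δ i := by
      refine Finset.sum_congr rfl fun i _ => ?_
      rcases le_or_gt 0 (J.mulVec Δ i) with h | h
      · simp [signVec, hσdef, h, abs_of_nonneg h]
      · simp [signVec, hσdef, not_le.mpr h, abs_of_neg h]
    rw [h1, hswap σ Δ]
    calc ∑ j, (∑ i, signVec σ i * J i j) * Δ j
        ≤ (∑ j, |∑ i, signVec σ i * J i j| ^ p') ^ (1 / p') * (∑ j, |Δ j| ^ p) ^ (1 / p) :=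
          Real.inner_le_Lp_mul_Lq Finset.univ _ _ hpq.symm
      _ ≤ M * (∑ j, |Δ j| ^ p) ^ (1 / p) := by
          refine mul_le_mul_of_nonneg_right ?_ (Real.rpow_nonneg
            (Finset.sum_nonneg fun _ _ => Real.rpow_nonneg (abs_nonneg _) _) _)
          exact le_ciSup (f := fun σ : Fin q → Bool =>
            pnorm p' (fun j => ∑ i, signVec σ i * J i j))
            (Set.Finite.bddAbove (Set.finite_range _)) σ
  -- witness for the lower bound
  have hWitness : 0 < M → ∀ δ : ℝ, 0 < δ → ∃ Δ : Fin d → ℝ,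
      (∑ j, |Δ j| ^ p ≤ d * δ ^ p) ∧
      (d : ℝ) ^ (1 / p) * δ * M ≤ ∑ i, |J.mulVec Δ i| := by
    intro hM δ hδ
    obtain ⟨σ, hσ⟩ := exists_eq_ciSup_of_finite
      (f := fun σ : Fin q → Bool => pnorm p' (fun j => ∑ i, signVec σ i * J i j))
    set v : Fin d → ℝ := fun j => ∑ i, signVec σ i * J i j with hvdef
    have hMv : M = pnorm p' v := hσ.symm
    set S : ℝ := ∑ j, |v j| ^ p' with hSdef
    have hS0 : 0 ≤ S := Finset.sum_nonneg fun _ _ => Real.rpow_nonneg (abs_nonneg _) _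
    have hSM : S ^ (1 / p') = M := by rw [hMv]; rfl
    have hSpos : 0 < S := by
      rcases hS0.lt_or_eq with h | h
      · exact h
      · exfalso
        rw [← h, Real.zero_rpow (by positivity)] at hSM
        exact absurd hSM.symm (ne_of_gt hM)
    set c : ℝ := (d : ℝ) ^ (1 / p) * δ / S ^ (1 / p) with hcdef
    have hc0 : 0 < c := by positivity
    set Δ : Fin d → ℝ := fun j => c * Real.sign (v j) * |v j| ^ (p' - 1) with hΔdef
    have hp'1 : (0 : ℝ) < p' - 1 := sub_pos.mpr hpq.symm.lt
    have habs : ∀ j, |Δ j| = c * |v j| ^ (p' - 1) := by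
      intro j
      have hΔj : Δ j = c * Real.sign (v j) * |v j| ^ (p' - 1) := rfl
      rw [hΔj, abs_mul, abs_mul, abs_of_pos hc0,
        abs_of_nonneg (Real.rpow_nonneg (abs_nonneg (v j)) _)]
      rcases lt_trichotomy (v j) 0 with h | h | h
      · rw [Real.sign_of_neg h]; norm_num
      · rw [h, Real.sign_zero, abs_zero, Real.zero_rpow hp'1.ne']
        ring
      · rw [Real.sign_of_pos h]; norm_num
    have hexp : (p' - 1) * p = p' := by
      have h1 : p - 1 ≠ 0 := sub_ne_zero.mpr (ne_of_gt hp)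
      rw [hp'def, div_sub_one h1, sub_sub_cancel, one_div_mul_eq_div]
    have hpow : ∀ j, |Δ j| ^ p = c ^ p * |v j| ^ p' := by
      intro j
      rw [habs j, Real.mul_rpow hc0.le (Real.rpow_nonneg (abs_nonneg _) _),
        ← Real.rpow_mul (abs_nonneg _), hexp]
    have hcpS : c ^ p * S = d * δ ^ p := by
      have h1 : c ^ p = (d : ℝ) * δ ^ p / S := by
        rw [hcdef, Real.div_rpow (by positivity) (Real.rpow_nonneg hS0 _),
          Real.mul_rpow (by positivity) hδ.le,
          ← Real.rpow_mul (Nat.cast_nonneg d), one_div_mul_cancel hp0.ne', Real.rpow_one,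
          ← Real.rpow_mul hS0, one_div_mul_cancel hp0.ne', Real.rpow_one]
      rw [h1, div_mul_cancel₀ _ hSpos.ne']
    have hsum : ∑ j, |Δ j| ^ p = d * δ ^ p := by
      simp only [hpow]
      rw [← Finset.mul_sum, ← hSdef, hcpS]
    refine ⟨Δ, le_of_eq hsum, ?_⟩
    have hdot : ∑ j, v j * Δ j = c * S := by
      rw [hSdef, Finset.mul_sum]
      refine Finset.sum_congr rfl fun j _ => ?_
      rcases eq_or_ne (v j) 0 with h | h
      · simp [hΔdef, h, abs_zero, Real.zero_rpow hp'0.ne']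
      · have hv : 0 < |v j| := abs_pos.mpr h
        have hsgn : v j * Real.sign (v j) = |v j| := by
          rcases h.lt_or_gt with hlt | hlt
          · rw [Real.sign_of_neg hlt, abs_of_neg hlt]; ring
          · rw [Real.sign_of_pos hlt, abs_of_pos hlt]; ring
        calc v j * Δ j = c * (v j * Real.sign (v j)) * |v j| ^ (p' - 1) := by
              rw [hΔdef]; ring
          _ = c * (|v j| ^ (1 : ℝ) * |v j| ^ (p' - 1)) := by
              rw [hsgn, Real.rpow_one]; ring
          _ = c * |v j| ^ p' := by rw [← Real.rpow_add hv]; ring_nf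
    have hcS : c * S = (d : ℝ) ^ (1 / p) * δ * M := by
      have h2 : 1 / p' = 1 - 1 / p := by
        have := hpq.inv_add_inv_eq_one
        rw [one_div, one_div]; linarith
      have h3 : S ^ (1 / p') = S / S ^ (1 / p) := by
        rw [h2, Real.rpow_sub hSpos, Real.rpow_one]
      rw [← hSM, h3, hcdef]
      have hSp : (S : ℝ) ^ (1 / p) ≠ 0 := by positivity
      field_simp
    calc (d : ℝ) ^ (1 / p) * δ * M = ∑ j, v j * Δ j := by rw [hdot, hcS]
      _ = ∑ i, signVec σ i * J.mulVec Δ i := (hswap σ Δ).symm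
      _ ≤ ∑ i, |J.mulVec Δ i| := Finset.sum_le_sum fun i _ => signVec_mul_le σ _ i
  -- little-o error bound
  rw [Metric.tendsto_nhdsWithin_nhds]
  intro ε hε
  set C : ℝ := q * (d : ℝ) ^ (1 / p) with hCdef
  have hC0 : 0 ≤ C := by positivity
  set ε' : ℝ := ε / (C + 1) with hε'def
  have hε' : 0 < ε' := by positivity
  have hlo := (hasFDerivAt_iff_isLittleO_nhds_zero.mp ht).def hε'
  rw [Metric.eventually_nhds_iff] at hlo
  obtain ⟨r, hr, hball⟩ := hlo
  have herr : ∀ Δ : Fin d → ℝ, ‖Δ‖ < r →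
      ∑ i, |t (X + Δ) i - t X i - J.mulVec Δ i| ≤ C * ε' * ‖Δ‖ / (d : ℝ) ^ (1 / p) := by
    intro Δ hΔ
    have h1 := hball (y := Δ) (by rwa [dist_zero_right])
    simp only [LinearMap.coe_toContinuousLinearMap', Matrix.mulVecLin_apply] at h1
    have h2 : ∑ i, |t (X + Δ) i - t X i - J.mulVec Δ i|
        ≤ q * ‖t (X + Δ) - t X - J.mulVec Δ‖ := by
      have := sum_abs_le_card_norm (fun i => t (X + Δ) i - t X i - J.mulVec Δ i)
      exact this
    calc ∑ i, |t (X + Δ) i - t X i - J.mulVec Δ i|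
        ≤ q * ‖t (X + Δ) - t X - J.mulVec Δ‖ := h2
      _ ≤ q * (ε' * ‖Δ‖) := by
          refine mul_le_mul_of_nonneg_left ?_ (Nat.cast_nonneg q)
          simpa [Real.norm_eq_abs] using h1
      _ = C * ε' * ‖Δ‖ / (d : ℝ) ^ (1 / p) := by
          rw [hCdef]; field_simp
  refine ⟨r / (d : ℝ) ^ (1 / p), by positivity, ?_⟩
  intro δ hδs hδd
  have hδ : 0 < δ := hδs
  rw [Real.dist_eq, sub_zero, abs_of_pos hδ] at hδd
  set S : Set ℝ := (fun Δ : Fin d → ℝ => ∑ i, |t (X + Δ) i - t X i|) ''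
      {Δ | ∑ j, |Δ j| ^ p ≤ d * δ ^ p} with hSdef
  -- basic facts about Δ in the constraint set
  have hΔfacts : ∀ Δ : Fin d → ℝ, ∑ j, |Δ j| ^ p ≤ d * δ ^ p →
      ‖Δ‖ ≤ (d : ℝ) ^ (1 / p) * δ ∧ ‖Δ‖ < r := by
    intro Δ hΔ
    have h1 : (∑ j, |Δ j| ^ p) ^ (1 / p) ≤ ((d : ℝ) * δ ^ p) ^ (1 / p) :=
      Real.rpow_le_rpow (Finset.sum_nonneg fun _ _ => Real.rpow_nonneg (abs_nonneg _) _)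
        hΔ (by positivity)
    have h2 : ((d : ℝ) * δ ^ p) ^ (1 / p) = (d : ℝ) ^ (1 / p) * δ := by
      rw [Real.mul_rpow (Nat.cast_nonneg d) (by positivity),
        ← Real.rpow_mul hδ.le, mul_one_div_cancel hp0.ne', Real.rpow_one]
    have h3 : ‖Δ‖ ≤ (d : ℝ) ^ (1 / p) * δ :=
      le_trans (pi_norm_le_pnorm hp0 Δ) (by rw [← h2]; exact h1)
    refine ⟨h3, lt_of_le_of_lt h3 ?_⟩
    calc (d : ℝ) ^ (1 / p) * δ < (d : ℝ) ^ (1 / p) * (r / (d : ℝ) ^ (1 / p)) :=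
          mul_lt_mul_of_pos_left hδd hd1
      _ = r := by field_simp
  -- upper bound for elements of S
  have hub : ∀ y ∈ S, y ≤ (d : ℝ) ^ (1 / p) * M * δ + C * ε' * δ := by
    rintro y ⟨Δ, hΔ, rfl⟩
    obtain ⟨hΔn, hΔr⟩ := hΔfacts Δ hΔ
    have htri : ∑ i, |t (X + Δ) i - t X i|
        ≤ ∑ i, |J.mulVec Δ i| + ∑ i, |t (X + Δ) i - t X i - J.mulVec Δ i| := by
      rw [← Finset.sum_add_distrib]
      refine Finset.sum_le_sum fun i _ => ?_
      calc |t (X + Δ) i - t X i|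
          = |J.mulVec Δ i + (t (X + Δ) i - t X i - J.mulVec Δ i)| := by congr 1; ring
        _ ≤ |J.mulVec Δ i| + |t (X + Δ) i - t X i - J.mulVec Δ i| := abs_add_le _ _
    have hJ : ∑ i, |J.mulVec Δ i| ≤ (d : ℝ) ^ (1 / p) * M * δ := by
      calc ∑ i, |J.mulVec Δ i| ≤ M * (∑ j, |Δ j| ^ p) ^ (1 / p) := hHolder Δ
        _ ≤ M * ((d : ℝ) ^ (1 / p) * δ) := by
            refine mul_le_mul_of_nonneg_left ?_ hM0
            have h1 : (∑ j, |Δ j| ^ p) ^ (1 / p) ≤ ((d : ℝ) * δ ^ p) ^ (1 / p) :=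
              Real.rpow_le_rpow
                (Finset.sum_nonneg fun _ _ => Real.rpow_nonneg (abs_nonneg _) _)
                hΔ (by positivity)
            rw [Real.mul_rpow (Nat.cast_nonneg d) (by positivity),
              ← Real.rpow_mul hδ.le, mul_one_div_cancel hp0.ne', Real.rpow_one] at h1
            exact h1
        _ = (d : ℝ) ^ (1 / p) * M * δ := by ring
    have hE : ∑ i, |t (X + Δ) i - t X i - J.mulVec Δ i| ≤ C * ε' * δ := by
      calc ∑ i, |t (X + Δ) i - t X i - J.mulVec Δ i|
          ≤ C * ε' * ‖Δ‖ / (d : ℝ) ^ (1 / p) := herr Δ hΔr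
        _ ≤ C * ε' * ((d : ℝ) ^ (1 / p) * δ) / (d : ℝ) ^ (1 / p) := by
            gcongr
        _ = C * ε' * δ := by field_simp
    linarith
  have hne : S.Nonempty := by
    refine ⟨∑ i, |t (X + 0) i - t X i|, ⟨0, ?_, rfl⟩⟩
    simp only [Set.mem_setOf_eq, Pi.zero_apply, abs_zero, Real.zero_rpow hp0.ne',
      Finset.sum_const_zero]
    positivity
  have hbdd : BddAbove S := ⟨(d : ℝ) ^ (1 / p) * M * δ + C * ε' * δ, hub⟩
  have hup : sSup S ≤ (d : ℝ) ^ (1 / p) * M * δ + C * ε' * δ := csSup_le hne hub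
  have hlow : (d : ℝ) ^ (1 / p) * M * δ - C * ε' * δ ≤ sSup S := by
    rcases hM0.lt_or_eq with hM | hM
    · obtain ⟨Δ, hΔ, hΔJ⟩ := hWitness hM δ hδ
      obtain ⟨hΔn, hΔr⟩ := hΔfacts Δ hΔ
      have hmem : (∑ i, |t (X + Δ) i - t X i|) ∈ S := ⟨Δ, hΔ, rfl⟩
      have htri : ∑ i, |J.mulVec Δ i| - ∑ i, |t (X + Δ) i - t X i - J.mulVec Δ i|
          ≤ ∑ i, |t (X + Δ) i - t X i| := by
        rw [sub_le_iff_le_add, ← Finset.sum_add_distrib]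
        refine Finset.sum_le_sum fun i _ => ?_
        have h1 : J.mulVec Δ i = (t (X + Δ) i - t X i) - (t (X + Δ) i - t X i - J.mulVec Δ i) := by
          ring
        calc |J.mulVec Δ i|
            = |(t (X + Δ) i - t X i) - (t (X + Δ) i - t X i - J.mulVec Δ i)| := by rw [← h1]
          _ ≤ |t (X + Δ) i - t X i| + |t (X + Δ) i - t X i - J.mulVec Δ i| := abs_sub _ _
      have hE : ∑ i, |t (X + Δ) i - t X i - J.mulVec Δ i| ≤ C * ε' * δ := by
        calc ∑ i, |t (X + Δ) i - t X i - J.mulVec Δ i|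
            ≤ C * ε' * ‖Δ‖ / (d : ℝ) ^ (1 / p) := herr Δ hΔr
          _ ≤ C * ε' * ((d : ℝ) ^ (1 / p) * δ) / (d : ℝ) ^ (1 / p) := by
              gcongr
          _ = C * ε' * δ := by field_simp
      have := le_csSup hbdd hmem
      have h2 : (d : ℝ) ^ (1 / p) * δ * M = (d : ℝ) ^ (1 / p) * M * δ := by ring
      rw [h2] at hΔJ
      linarith
    · have h0 : (0 : ℝ) ∈ S := by
        refine ⟨0, ?_, by simp⟩
        simp only [Set.mem_setOf_eq, Pi.zero_apply, abs_zero, Real.zero_rpow hp0.ne',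
          Finset.sum_const_zero]
        positivity
      have := le_csSup hbdd h0
      rw [← hM]
      have : C * ε' * δ ≥ 0 := by positivity
      have := le_csSup hbdd h0
      nlinarith
  -- conclude
  rw [Real.dist_eq]
  have key : |1 / δ * sSup S - (d : ℝ) ^ (1 / p) * M| ≤ C * ε' := by
    have h1 : 1 / δ * ((d : ℝ) ^ (1 / p) * M * δ - C * ε' * δ) ≤ 1 / δ * sSup S :=
      mul_le_mul_of_nonneg_left hlow (by positivity)
    have h2 : 1 / δ * sSup S ≤ 1 / δ * ((d : ℝ) ^ (1 / p) * M * δ + C * ε' * δ) :=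
      mul_le_mul_of_nonneg_left hup (by positivity)
    have e1 : 1 / δ * ((d : ℝ) ^ (1 / p) * M * δ - C * ε' * δ)
        = (d : ℝ) ^ (1 / p) * M - C * ε' := by field_simp
    have e2 : 1 / δ * ((d : ℝ) ^ (1 / p) * M * δ + C * ε' * δ)
        = (d : ℝ) ^ (1 / p) * M + C * ε' := by field_simp
    rw [e1] at h1
    rw [e2] at h2
    rw [abs_le]
    constructor <;> linarith
  have hfin : C * ε' < ε := by
    rw [hε'def]
    rw [mul_div_assoc'] -- C * (ε / (C+1)) = C * ε / (C+1)
    rw [div_lt_iff₀ (by positivity : (0:ℝ) < C + 1)]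
    have he : ε * (C + 1) = C * ε + ε := by ring
    rw [he]
    linarith
  exact lt_of_le_of_lt key hfin
end

section
/- (Proposition 2, lower bound.) Let N be a positive integer, p > 1, and let u₁, …, u_N, v₁, …, v_N, z₁, …, z_N be real numbers. Set a = Σₙ uₙ, b = Σₙ zₙuₙ, c = Σₙ vₙ, d = Σₙ zₙvₙ, and suppose ad − bc ≠ 0. Then (N^{1/p}/|ad − bc|)·max over s ∈ {−1, 1} of (Σ_{n=1}^N |(d − s·c)·uₙ + (s·a − b)·vₙ|^{p/(p−1)})^{(p−1)/p} ≥ 1. -/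
open Real

/-- Proposition 2, lower bound: with `a = ∑ uₙ`, `b = ∑ zₙuₙ`, `c = ∑ vₙ`,
`d = ∑ zₙvₙ` and `ad − bc ≠ 0`, the adversarial influence function expression
`(N^{1/p}/|ad−bc|)·max_{s∈{−1,1}} (∑ₙ |(d−s·c)uₙ + (s·a−b)vₙ|^{p/(p−1)})^{(p−1)/p}`
is at least `1`. -/
theorem stmt6 (N : ℕ) (hN : 0 < N) (p : ℝ) (hp : 1 < p)
    (u v z : Fin N → ℝ) (a b c d : ℝ)
    (ha : a = ∑ n, u n) (hb : b = ∑ n, z n * u n)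
    (hc : c = ∑ n, v n) (hd : d = ∑ n, z n * v n)
    (hdet : a * d - b * c ≠ 0) :
    1 ≤ ((N : ℝ) ^ (1 / p) / |a * d - b * c|) *
      max ((∑ n, |(d - 1 * c) * u n + (1 * a - b) * v n| ^ (p / (p - 1))) ^ ((p - 1) / p))
        ((∑ n, |(d - (-1) * c) * u n + ((-1) * a - b) * v n| ^ (p / (p - 1))) ^ ((p - 1) / p)) := by
  have hq : p.HolderConjugate (p / (p - 1)) := Real.HolderConjugate.conjExponent hp
  set w : Fin N → ℝ := fun n => (d - 1 * c) * u n + (1 * a - b) * v n with hw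
  have hsum : ∑ n, w n = a * d - b * c := by
    have h1 : ∑ n, w n = (d - 1 * c) * (∑ n, u n) + (1 * a - b) * (∑ n, v n) := by
      simp [hw, Finset.mul_sum, Finset.sum_add_distrib]
    rw [h1, ← ha, ← hc]; ring
  have hH := Real.inner_le_Lp_mul_Lq Finset.univ (fun _ => (1 : ℝ)) w hq
  have hH2 := Real.inner_le_Lp_mul_Lq Finset.univ (fun _ => (1 : ℝ)) (-w) hq
  simp only [one_mul, abs_one, Real.one_rpow, Finset.sum_const, Finset.card_univ,
    Fintype.card_fin, nsmul_eq_mul, mul_one, Pi.neg_apply, abs_neg,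
    Finset.sum_neg_distrib] at hH hH2
  set A : ℝ := (∑ n, |w n| ^ (p / (p - 1))) ^ ((p - 1) / p) with hA
  have hq1 : 1 / (p / (p - 1)) = (p - 1) / p := one_div_div _ _
  rw [hq1] at hH hH2
  have habs : |a * d - b * c| ≤ ((N : ℝ)) ^ (1 / p) * A := by
    rw [← hsum, abs_le]
    constructor
    · nlinarith [hH2]
    · exact hH
  have hdetpos : 0 < |a * d - b * c| := abs_pos.2 hdet
  have hNp : (0 : ℝ) ≤ (N : ℝ) ^ (1 / p) := Real.rpow_nonneg (Nat.cast_nonneg N) _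
  have hmax : A ≤ max A ((∑ n, |(d - (-1) * c) * u n + ((-1) * a - b) * v n| ^ (p / (p - 1))) ^ ((p - 1) / p)) :=
    le_max_left _ _
  have : |a * d - b * c| ≤ (N : ℝ) ^ (1 / p) *
      max A ((∑ n, |(d - (-1) * c) * u n + ((-1) * a - b) * v n| ^ (p / (p - 1))) ^ ((p - 1) / p)) :=
    habs.trans (mul_le_mul_of_nonneg_left hmax hNp)
  rw [div_mul_eq_mul_div, le_div_iff₀ hdetpos, one_mul]
  simpa [hA, hw] using this
end

section
/- Let Z₁, Z₂, … be i.i.d. real random variables with common law F₀, let θ₁ ∈ ℝ and θ₂ > 0, and set Xₙ = θ₁ + θ₂Zₙ. Let g : ℝ → ℝ be continuous, and suppose there exists a measurable K : ℝ → [0, ∞) with E[K(Z₁)] < ∞ such that |g((x − t)/s)| ≤ K((x − θ₁)/θ₂) for all x and all (t, s) in some neighborhood of (θ₁, θ₂). Let T_N and S_N be random sequences with T_N → θ₁ almost surely and S_N → θ₂ almost surely. Then (1/N)·Σ_{n=1}^N g((Xₙ − T_N)/S_N) → E[g(Z₁)] almost surely as N → ∞. -/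
open Real Filter MeasureTheory ProbabilityTheory

/-- uniform strong law step: let `Zₙ` be i.i.d. with law `F₀`,
`Xₙ = θ₁ + θ₂Zₙ` with `θ₂ > 0`, `g` continuous and dominated by an integrable envelope `K`
uniformly over `(t, s)` in a neighborhood of `(θ₁, θ₂)`, and `T_N → θ₁`, `S_N → θ₂` a.s.
Then `(1/N)·∑_{n<N} g((Xₙ − T_N)/S_N) → E[g(Z₁)]` almost surely. -/
theorem stmt9 {Ω : Type*} [MeasurableSpace Ω] (μ : Measure Ω) [IsProbabilityMeasure μ]
    (Z : ℕ → Ω → ℝ) (hZmeas : ∀ n, Measurable (Z n))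
    (hindep : iIndepFun (m := fun _ => Real.measurableSpace) Z μ)
    (F₀ : Measure ℝ) (hid : ∀ n, Measure.map (Z n) μ = F₀)
    (θ₁ θ₂ : ℝ) (hθ₂ : 0 < θ₂)
    (X : ℕ → Ω → ℝ) (hX : ∀ n ω, X n ω = θ₁ + θ₂ * Z n ω)
    (g : ℝ → ℝ) (hg : Continuous g)
    (K : ℝ → ℝ) (hKmeas : Measurable K) (hKnonneg : ∀ x, 0 ≤ K x)
    (hKint : Integrable (fun ω => K (Z 0 ω)) μ)
    (hdom : ∃ U ∈ nhds (θ₁, θ₂), ∀ x : ℝ, ∀ ts ∈ U,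
      |g ((x - Prod.fst ts) / Prod.snd ts)| ≤ K ((x - θ₁) / θ₂))
    (T S : ℕ → Ω → ℝ)
    (hT : ∀ᵐ ω ∂μ, Tendsto (fun N => T N ω) atTop (nhds θ₁))
    (hS : ∀ᵐ ω ∂μ, Tendsto (fun N => S N ω) atTop (nhds θ₂)) :
    ∀ᵐ ω ∂μ, Tendsto
      (fun N : ℕ => (1 / (N : ℝ)) * ∑ n ∈ Finset.range N, g ((X n ω - T N ω) / S N ω))
      atTop (nhds (∫ z, g z ∂F₀)) := by
  classical
  obtain ⟨U, hU, hUdom⟩ := hdom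
  set c : ℝ × ℝ := (θ₁, θ₂) with hc
  -- a ball around (θ₁, θ₂) contained in U and in the region {s > 0}
  have hopen : {p : ℝ × ℝ | 0 < p.2} ∈ nhds c :=
    (isOpen_lt continuous_const continuous_snd).mem_nhds (by simpa [hc] using hθ₂)
  obtain ⟨r, hr, hballU⟩ := Metric.mem_nhds_iff.mp (Filter.inter_mem hU hopen)
  set rk : ℕ → ℝ := fun k => r / (k + 1) with hrk_def
  have hrk : ∀ k, 0 < rk k := fun k => by positivity
  have hrkle : ∀ k, rk k ≤ r := fun k => by
    rw [hrk_def]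
    exact div_le_self hr.le (by exact_mod_cast Nat.one_le_iff_ne_zero.mpr (Nat.succ_ne_zero k))
  have hballk : ∀ k, Metric.ball c (rk k) ⊆ U ∩ {p : ℝ × ℝ | 0 < p.2} := fun k =>
    (Metric.ball_subset_ball (hrkle k)).trans hballU
  -- φ z p = g((θ₁ + θ₂ z − p.1)/p.2)
  set φ : ℝ → ℝ × ℝ → ℝ := fun z p => g ((θ₁ + θ₂ * z - p.1) / p.2) with hφ_def
  have hsimp : ∀ z : ℝ, (θ₁ + θ₂ * z - θ₁) / θ₂ = z := fun z => by field_simp; ring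
  have hφK : ∀ z : ℝ, ∀ p ∈ Metric.ball c r, |φ z p| ≤ K z := by
    intro z p hp
    have := hUdom (θ₁ + θ₂ * z) p (hballU hp).1
    rwa [hsimp z] at this
  have hφc : ∀ z : ℝ, φ z c = g z := fun z => by
    simp only [hφ_def, hc]
    rw [hsimp z]
  have hgK : ∀ z : ℝ, |g z| ≤ K z := by
    intro z
    have := hφK z c (Metric.mem_ball_self hr)
    rwa [hφc z] at this
  -- envelope families indexed by rational points
  set term : ℕ → ℝ → ℚ × ℚ → ℝ := fun k z q =>
    if ((q.1 : ℝ), (q.2 : ℝ)) ∈ Metric.ball c (rk k) then φ z ((q.1 : ℝ), (q.2 : ℝ)) else g z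
    with hterm_def
  set Gp : ℕ → ℝ → ℝ := fun k z => ⨆ q : ℚ × ℚ, term k z q with hGp_def
  set Gm : ℕ → ℝ → ℝ := fun k z => ⨅ q : ℚ × ℚ, term k z q with hGm_def
  have htermK : ∀ k z q, |term k z q| ≤ K z := by
    intro k z q
    simp only [hterm_def]
    split_ifs with h
    · exact hφK z _ (Metric.ball_subset_ball (hrkle k) h)
    · exact hgK z
  have hbddA : ∀ k z, BddAbove (Set.range (term k z)) := fun k z =>
    ⟨K z, by rintro y ⟨q, rfl⟩; exact (abs_le.mp (htermK k z q)).2⟩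
  have hbddB : ∀ k z, BddBelow (Set.range (term k z)) := fun k z =>
    ⟨-K z, by rintro y ⟨q, rfl⟩; exact (abs_le.mp (htermK k z q)).1⟩
  have hGpK : ∀ k z, |Gp k z| ≤ K z := by
    intro k z
    rw [abs_le]
    constructor
    · calc -K z ≤ term k z ⟨0, 0⟩ := (abs_le.mp (htermK k z ⟨0, 0⟩)).1
        _ ≤ Gp k z := le_ciSup (hbddA k z) _
    · exact ciSup_le fun q => (abs_le.mp (htermK k z q)).2
  have hGmK : ∀ k z, |Gm k z| ≤ K z := by
    intro k z
    rw [abs_le]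
    constructor
    · exact le_ciInf fun q => (abs_le.mp (htermK k z q)).1
    · calc Gm k z ≤ term k z ⟨0, 0⟩ := ciInf_le (hbddB k z) _
        _ ≤ K z := (abs_le.mp (htermK k z ⟨0, 0⟩)).2
  have htermMeas : ∀ k (q : ℚ × ℚ), Measurable (fun z => term k z q) := by
    intro k q
    simp only [hterm_def]
    by_cases h : ((q.1 : ℝ), (q.2 : ℝ)) ∈ Metric.ball c (rk k)
    · simp only [h, if_true]
      exact hg.measurable.comp (by fun_prop)
    · simp only [h, if_false]
      exact hg.measurable
  have hGpMeas : ∀ k, Measurable (Gp k) := fun k => Measurable.iSup (htermMeas k)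
  have hGmMeas : ∀ k, Measurable (Gm k) := fun k => Measurable.iInf (htermMeas k)
  -- density of rational points
  have hD : DenseRange (fun q : ℚ × ℚ => (((q.1 : ℝ), (q.2 : ℝ)) : ℝ × ℝ)) :=
    Rat.denseRange_cast.prodMap Rat.denseRange_cast
  -- continuity of φ z at points with positive second coordinate
  have hφcont : ∀ (z : ℝ) (p : ℝ × ℝ), 0 < p.2 → ContinuousAt (φ z) p := by
    intro z p hp2
    exact hg.continuousAt.comp
      (((continuousAt_const.sub continuousAt_fst).div continuousAt_snd hp2.ne'))
  -- key sandwich at real points of the ball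
  have hA : ∀ k (z : ℝ), ∀ p ∈ Metric.ball c (rk k), Gm k z ≤ φ z p ∧ φ z p ≤ Gp k z := by
    intro k z p hp
    have hp2 : 0 < p.2 := (hballk k hp).2
    have hcl : p ∈ closure (Metric.ball c (rk k) ∩
        Set.range (fun q : ℚ × ℚ => (((q.1 : ℝ), (q.2 : ℝ)) : ℝ × ℝ))) :=
      hD.open_subset_closure_inter Metric.isOpen_ball hp
    obtain ⟨u, humem, hulim⟩ := mem_closure_iff_seq_limit.mp hcl
    have hφlim : Tendsto (fun j => φ z (u j)) atTop (nhds (φ z p)) :=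
      (hφcont z p hp2).tendsto.comp hulim
    have hterm_eq : ∀ j, Gm k z ≤ φ z (u j) ∧ φ z (u j) ≤ Gp k z := by
      intro j
      obtain ⟨hjball, q, hq⟩ := humem j
      have h1 : term k z q = φ z (u j) := by
        simp only [hterm_def]
        simp only [hq, hjball, if_true]
      constructor
      · rw [← h1]; exact ciInf_le (hbddB k z) q
      · rw [← h1]; exact le_ciSup (hbddA k z) q
    exact ⟨ge_of_tendsto hφlim (Filter.Eventually.of_forall fun j => (hterm_eq j).1),
      le_of_tendsto hφlim (Filter.Eventually.of_forall fun j => (hterm_eq j).2)⟩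
  have hGz : ∀ k z, Gm k z ≤ g z ∧ g z ≤ Gp k z := by
    intro k z
    have := hA k z c (Metric.mem_ball_self (hrk k))
    rwa [hφc z] at this
  -- pointwise convergence of the envelopes as k → ∞
  have hGlim : ∀ z : ℝ, Tendsto (fun k => Gp k z) atTop (nhds (g z)) ∧
      Tendsto (fun k => Gm k z) atTop (nhds (g z)) := by
    intro z
    have key : ∀ ε > (0 : ℝ), ∃ k₀ : ℕ, ∀ k ≥ k₀,
        (∀ q : ℚ × ℚ, term k z q ≤ g z + ε) ∧ (∀ q : ℚ × ℚ, g z - ε ≤ term k z q) := by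
      intro ε hε
      have hcont : ContinuousAt (φ z) c := hφcont z c hθ₂
      rw [Metric.continuousAt_iff] at hcont
      obtain ⟨δ, hδ, hδc⟩ := hcont ε hε
      obtain ⟨n, hn⟩ := exists_nat_gt (r / δ)
      refine ⟨n, fun k hk => ?_⟩
      have hrkδ : rk k < δ := by
        rw [hrk_def, div_lt_iff₀ (by positivity)]
        have h1 : r / δ < (k : ℝ) + 1 := by
          have : (n : ℝ) ≤ k := by exact_mod_cast hk
          linarith
        calc r = (r / δ) * δ := by field_simp
          _ < ((k : ℝ) + 1) * δ := by
            apply mul_lt_mul_of_pos_right h1 hδ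
          _ = δ * ((k : ℝ) + 1) := by ring
      have hbound : ∀ q : ℚ × ℚ, |term k z q - g z| ≤ ε := by
        intro q
        simp only [hterm_def]
        split_ifs with h
        · have : dist ((((q.1 : ℝ), (q.2 : ℝ))) : ℝ × ℝ) c < δ := lt_trans h hrkδ
          have := hδc this
          rw [hφc z] at this
          rw [Real.dist_eq] at this
          exact this.le
        · simpa using hε.le
      exact ⟨fun q => by have := (abs_le.mp (hbound q)).2; linarith,
        fun q => by have := (abs_le.mp (hbound q)).1; linarith⟩
    constructor
    · rw [Metric.tendsto_atTop]
      intro ε hε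
      obtain ⟨k₀, hk₀⟩ := key (ε / 2) (by linarith)
      refine ⟨k₀, fun k hk => ?_⟩
      have h1 : Gp k z ≤ g z + ε / 2 := ciSup_le fun q => (hk₀ k hk).1 q
      have h2 : g z ≤ Gp k z := (hGz k z).2
      rw [Real.dist_eq]
      have : |Gp k z - g z| ≤ ε / 2 := abs_le.mpr ⟨by linarith, by linarith⟩
      linarith
    · rw [Metric.tendsto_atTop]
      intro ε hε
      obtain ⟨k₀, hk₀⟩ := key (ε / 2) (by linarith)
      refine ⟨k₀, fun k hk => ?_⟩
      have h1 : g z - ε / 2 ≤ Gm k z := le_ciInf fun q => (hk₀ k hk).2 q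
      have h2 : Gm k z ≤ g z := (hGz k z).1
      rw [Real.dist_eq]
      have : |Gm k z - g z| ≤ ε / 2 := abs_le.mpr ⟨by linarith, by linarith⟩
      linarith
  -- integrability of K with respect to F₀
  have hKF₀ : Integrable K F₀ := by
    rw [← hid 0]
    exact (integrable_map_measure hKmeas.aestronglyMeasurable (hZmeas 0).aemeasurable).mpr hKint
  have hGpInt : ∀ k, Integrable (Gp k) F₀ := fun k =>
    hKF₀.mono (hGpMeas k).aestronglyMeasurable (ae_of_all _ fun z => by
      rw [Real.norm_eq_abs, Real.norm_eq_abs, abs_of_nonneg (hKnonneg z)]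
      exact hGpK k z)
  have hGmInt : ∀ k, Integrable (Gm k) F₀ := fun k =>
    hKF₀.mono (hGmMeas k).aestronglyMeasurable (ae_of_all _ fun z => by
      rw [Real.norm_eq_abs, Real.norm_eq_abs, abs_of_nonneg (hKnonneg z)]
      exact hGmK k z)
  -- convergence of the envelope integrals
  have hIp : Tendsto (fun k => ∫ z, Gp k z ∂F₀) atTop (nhds (∫ z, g z ∂F₀)) := by
    refine tendsto_integral_of_dominated_convergence K
      (fun k => (hGpMeas k).aestronglyMeasurable) hKF₀
      (fun k => ae_of_all _ fun z => by rw [Real.norm_eq_abs]; exact hGpK k z)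
      (ae_of_all _ fun z => (hGlim z).1)
  have hIm : Tendsto (fun k => ∫ z, Gm k z ∂F₀) atTop (nhds (∫ z, g z ∂F₀)) := by
    refine tendsto_integral_of_dominated_convergence K
      (fun k => (hGmMeas k).aestronglyMeasurable) hKF₀
      (fun k => ae_of_all _ fun z => by rw [Real.norm_eq_abs]; exact hGmK k z)
      (ae_of_all _ fun z => (hGlim z).2)
  -- identical distribution of the Zₙ
  have hident : ∀ n, IdentDistrib (Z n) (Z 0) μ μ := fun n =>
    ⟨(hZmeas n).aemeasurable, (hZmeas 0).aemeasurable, by rw [hid n, hid 0]⟩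
  -- strong law for the envelope families
  have hslp : ∀ k, ∀ᵐ ω ∂μ, Tendsto
      (fun N : ℕ => (∑ n ∈ Finset.range N, Gp k (Z n ω)) / N) atTop
      (nhds (∫ z, Gp k z ∂F₀)) := by
    intro k
    have hint : Integrable (fun ω => Gp k (Z 0 ω)) μ := by
      have := (hGpInt k)
      rw [← hid 0] at this
      exact (integrable_map_measure (hGpMeas k).aestronglyMeasurable
        (hZmeas 0).aemeasurable).mp this
    have hmean : (∫ ω, Gp k (Z 0 ω) ∂μ) = ∫ z, Gp k z ∂F₀ := by
      rw [← hid 0, integral_map (hZmeas 0).aemeasurable (hGpMeas k).aestronglyMeasurable]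
    have := strong_law_ae_real (fun n ω => Gp k (Z n ω)) hint
      (fun i j hij => (hindep.indepFun hij).comp (hGpMeas k) (hGpMeas k))
      (fun n => (hident n).comp (hGpMeas k))
    rw [hmean] at this
    exact this
  have hslm : ∀ k, ∀ᵐ ω ∂μ, Tendsto
      (fun N : ℕ => (∑ n ∈ Finset.range N, Gm k (Z n ω)) / N) atTop
      (nhds (∫ z, Gm k z ∂F₀)) := by
    intro k
    have hint : Integrable (fun ω => Gm k (Z 0 ω)) μ := by
      have := (hGmInt k)
      rw [← hid 0] at this
      exact (integrable_map_measure (hGmMeas k).aestronglyMeasurable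
        (hZmeas 0).aemeasurable).mp this
    have hmean : (∫ ω, Gm k (Z 0 ω) ∂μ) = ∫ z, Gm k z ∂F₀ := by
      rw [← hid 0, integral_map (hZmeas 0).aemeasurable (hGmMeas k).aestronglyMeasurable]
    have := strong_law_ae_real (fun n ω => Gm k (Z n ω)) hint
      (fun i j hij => (hindep.indepFun hij).comp (hGmMeas k) (hGmMeas k))
      (fun n => (hident n).comp (hGmMeas k))
    rw [hmean] at this
    exact this
  -- collect the almost sure events
  filter_upwards [hT, hS, ae_all_iff.mpr hslp, ae_all_iff.mpr hslm] with ω hTω hSω hPω hMω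
  set I : ℝ := ∫ z, g z ∂F₀ with hI
  rw [Metric.tendsto_atTop]
  intro ε hε
  -- choose k such that the envelope integrals are ε/4-close to I
  have h4 : (0 : ℝ) < ε / 4 := by linarith
  obtain ⟨k₁, hk₁⟩ := (Metric.tendsto_atTop.mp hIp) (ε / 4) h4
  obtain ⟨k₂, hk₂⟩ := (Metric.tendsto_atTop.mp hIm) (ε / 4) h4
  set k := max k₁ k₂ with hk
  have hIpk : |(∫ z, Gp k z ∂F₀) - I| < ε / 4 := by
    have := hk₁ k (le_max_left _ _); rwa [Real.dist_eq] at this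
  have hImk : |(∫ z, Gm k z ∂F₀) - I| < ε / 4 := by
    have := hk₂ k (le_max_right _ _); rwa [Real.dist_eq] at this
  -- eventual facts in N
  have hTS : Tendsto (fun N => ((T N ω, S N ω) : ℝ × ℝ)) atTop (nhds c) :=
    hTω.prodMk_nhds hSω
  have hball_ev : ∀ᶠ N in atTop, ((T N ω, S N ω) : ℝ × ℝ) ∈ Metric.ball c (rk k) :=
    hTS (Metric.ball_mem_nhds c (hrk k))
  have hPev : ∀ᶠ N in atTop,
      dist ((∑ n ∈ Finset.range N, Gp k (Z n ω)) / N) (∫ z, Gp k z ∂F₀) < ε / 4 := by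
    obtain ⟨N₀, hN₀⟩ := Metric.tendsto_atTop.mp (hPω k) (ε / 4) h4
    exact Filter.eventually_atTop.mpr ⟨N₀, hN₀⟩
  have hMev : ∀ᶠ N in atTop,
      dist ((∑ n ∈ Finset.range N, Gm k (Z n ω)) / N) (∫ z, Gm k z ∂F₀) < ε / 4 := by
    obtain ⟨N₀, hN₀⟩ := Metric.tendsto_atTop.mp (hMω k) (ε / 4) h4
    exact Filter.eventually_atTop.mpr ⟨N₀, hN₀⟩
  have hcomb : ∀ᶠ N in atTop, ((T N ω, S N ω) : ℝ × ℝ) ∈ Metric.ball c (rk k) ∧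
      dist ((∑ n ∈ Finset.range N, Gp k (Z n ω)) / N) (∫ z, Gp k z ∂F₀) < ε / 4 ∧
      dist ((∑ n ∈ Finset.range N, Gm k (Z n ω)) / N) (∫ z, Gm k z ∂F₀) < ε / 4 ∧
      1 ≤ N := by
    filter_upwards [hball_ev, hPev, hMev, Filter.eventually_ge_atTop 1] with N h1 h2 h3 h4
    exact ⟨h1, h2, h3, h4⟩
  obtain ⟨N₀, hN₀⟩ := Filter.eventually_atTop.mp hcomb
  refine ⟨N₀, fun N hN => ?_⟩
  obtain ⟨hballN, hPN, hMN, hN1⟩ := hN₀ N hN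
  have hNpos : (0 : ℝ) < N := by exact_mod_cast hN1
  -- sandwich the average
  have hsand : ∀ n ∈ Finset.range N,
      Gm k (Z n ω) ≤ g ((X n ω - T N ω) / S N ω) ∧
      g ((X n ω - T N ω) / S N ω) ≤ Gp k (Z n ω) := by
    intro n _
    have := hA k (Z n ω) (T N ω, S N ω) hballN
    rw [hφ_def] at this
    simp only at this
    rw [hX n ω]
    exact this
  have hlow : (∑ n ∈ Finset.range N, Gm k (Z n ω)) / N ≤
      (1 / (N : ℝ)) * ∑ n ∈ Finset.range N, g ((X n ω - T N ω) / S N ω) := by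
    rw [one_div, inv_mul_eq_div, div_le_div_iff_of_pos_right hNpos]
    exact Finset.sum_le_sum fun n hn => (hsand n hn).1
  have hhigh : (1 / (N : ℝ)) * ∑ n ∈ Finset.range N, g ((X n ω - T N ω) / S N ω) ≤
      (∑ n ∈ Finset.range N, Gp k (Z n ω)) / N := by
    rw [one_div, inv_mul_eq_div, div_le_div_iff_of_pos_right hNpos]
    exact Finset.sum_le_sum fun n hn => (hsand n hn).2
  rw [Real.dist_eq] at hPN hMN ⊢
  have hp := abs_lt.mp hPN
  have hm := abs_lt.mp hMN
  have hip := abs_lt.mp hIpk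
  have him := abs_lt.mp hImk
  rw [abs_lt]
  constructor <;> [linarith; linarith]
end

section
/- Let Z be a real random variable with E[Z²] < ∞ and E[Z²] > 0, and let φ₁, φ₂ : ℝ → ℝ be measurable with E[φ₁(Z)²] < ∞, E[φ₂(Z)²] < ∞, E[φ₁(Z)] ≠ 0, and E[Z·φ₂(Z)] ≠ 0. Then E[φ₁(Z)²]/(E[φ₁(Z)])² + E[φ₂(Z)²]/(E[Z·φ₂(Z)])² ≥ 1 + 1/E[Z²]. -/
open Real MeasureTheory

lemma cs_sq {Ω : Type*} [MeasurableSpace Ω] (μ : Measure Ω) [IsProbabilityMeasure μ]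
    (f g : Ω → ℝ) (hf : MemLp f 2 μ) (hg : MemLp g 2 μ) :
    (∫ ω, f ω * g ω ∂μ) ^ 2 ≤ (∫ ω, (f ω) ^ 2 ∂μ) * (∫ ω, (g ω) ^ 2 ∂μ) := by
  have hpq : Real.HolderConjugate 2 2 := by
    constructor <;> norm_num
  have hf2 : MemLp f (ENNReal.ofReal 2) μ := by simpa using hf
  have hg2 : MemLp g (ENNReal.ofReal 2) μ := by simpa using hg
  have key := integral_mul_norm_le_Lp_mul_Lq hpq hf2 hg2
  have habs : |∫ ω, f ω * g ω ∂μ| ≤ ∫ ω, ‖f ω‖ * ‖g ω‖ ∂μ := by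
    calc |∫ ω, f ω * g ω ∂μ| = ‖∫ ω, f ω * g ω ∂μ‖ := (Real.norm_eq_abs _).symm
      _ ≤ ∫ ω, ‖f ω * g ω‖ ∂μ := norm_integral_le_integral_norm _
      _ = ∫ ω, ‖f ω‖ * ‖g ω‖ ∂μ := by simp_rw [norm_mul]
  have hend : ∫ ω, ‖f ω‖ * ‖g ω‖ ∂μ ≤
      (∫ ω, ‖f ω‖ ^ (2:ℝ) ∂μ) ^ ((1:ℝ)/2) * (∫ ω, ‖g ω‖ ^ (2:ℝ) ∂μ) ^ ((1:ℝ)/2) :=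
    key
  have hIf : ∫ ω, ‖f ω‖ ^ (2:ℝ) ∂μ = ∫ ω, (f ω) ^ 2 ∂μ := by
    refine integral_congr_ae (Filter.Eventually.of_forall fun ω => ?_)
    have h2 : (2:ℝ) = ((2:ℕ):ℝ) := by norm_num
    show _ ^ (2:ℝ) = _ ^ (2:ℕ)
    rw [h2, Real.rpow_natCast, Real.norm_eq_abs, sq_abs]
  have hIg : ∫ ω, ‖g ω‖ ^ (2:ℝ) ∂μ = ∫ ω, (g ω) ^ 2 ∂μ := by
    refine integral_congr_ae (Filter.Eventually.of_forall fun ω => ?_)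
    have h2 : (2:ℝ) = ((2:ℕ):ℝ) := by norm_num
    show _ ^ (2:ℝ) = _ ^ (2:ℕ)
    rw [h2, Real.rpow_natCast, Real.norm_eq_abs, sq_abs]
  rw [hIf, hIg] at hend
  have hfnn : 0 ≤ ∫ ω, (f ω) ^ 2 ∂μ := integral_nonneg fun ω => sq_nonneg _
  have hgnn : 0 ≤ ∫ ω, (g ω) ^ 2 ∂μ := integral_nonneg fun ω => sq_nonneg _
  have h2 : |∫ ω, f ω * g ω ∂μ| ≤
      (∫ ω, (f ω) ^ 2 ∂μ) ^ ((1:ℝ)/2) * (∫ ω, (g ω) ^ 2 ∂μ) ^ ((1:ℝ)/2) :=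
    habs.trans hend
  have := sq_le_sq' (neg_le_of_abs_le h2 |>.trans_eq rfl |> fun h => h) (le_of_abs_le h2)
  calc (∫ ω, f ω * g ω ∂μ) ^ 2 = |∫ ω, f ω * g ω ∂μ| ^ 2 := (sq_abs _).symm
    _ ≤ ((∫ ω, (f ω) ^ 2 ∂μ) ^ ((1:ℝ)/2) * (∫ ω, (g ω) ^ 2 ∂μ) ^ ((1:ℝ)/2)) ^ 2 := by
        apply pow_le_pow_left₀ (abs_nonneg _) h2
    _ = (∫ ω, (f ω) ^ 2 ∂μ) * (∫ ω, (g ω) ^ 2 ∂μ) := by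
        rw [mul_pow, ← Real.rpow_natCast (_ ^ ((1:ℝ)/2)) 2, ← Real.rpow_natCast (_ ^ ((1:ℝ)/2)) 2,
          ← Real.rpow_mul hfnn, ← Real.rpow_mul hgnn]
        norm_num

theorem stmt11 {Ω : Type*} [MeasurableSpace Ω] (μ : Measure Ω) [IsProbabilityMeasure μ]
    (Z : Ω → ℝ) (hZ : Measurable Z)
    (hZ2 : Integrable (fun ω => (Z ω) ^ 2) μ) (hZ2pos : 0 < ∫ ω, (Z ω) ^ 2 ∂μ)
    (φ₁ φ₂ : ℝ → ℝ) (hφ₁ : Measurable φ₁) (hφ₂ : Measurable φ₂)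
    (h1 : Integrable (fun ω => (φ₁ (Z ω)) ^ 2) μ)
    (h2 : Integrable (fun ω => (φ₂ (Z ω)) ^ 2) μ)
    (h3 : (∫ ω, φ₁ (Z ω) ∂μ) ≠ 0)
    (h4 : (∫ ω, Z ω * φ₂ (Z ω) ∂μ) ≠ 0) :
    (∫ ω, (φ₁ (Z ω)) ^ 2 ∂μ) / (∫ ω, φ₁ (Z ω) ∂μ) ^ 2 +
      (∫ ω, (φ₂ (Z ω)) ^ 2 ∂μ) / (∫ ω, Z ω * φ₂ (Z ω) ∂μ) ^ 2 ≥
      1 + 1 / ∫ ω, (Z ω) ^ 2 ∂μ := by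
  have hm1 : MemLp (fun ω => φ₁ (Z ω)) 2 μ :=
    (memLp_two_iff_integrable_sq ((hφ₁.comp hZ).aestronglyMeasurable)).2 h1
  have hm2 : MemLp (fun ω => φ₂ (Z ω)) 2 μ :=
    (memLp_two_iff_integrable_sq ((hφ₂.comp hZ).aestronglyMeasurable)).2 h2
  have hmZ : MemLp Z 2 μ :=
    (memLp_two_iff_integrable_sq hZ.aestronglyMeasurable).2 hZ2
  have hmone : MemLp (fun _ : Ω => (1:ℝ)) 2 μ := memLp_const 1
  -- first term ≥ 1
  have cs1 := cs_sq μ (fun ω => φ₁ (Z ω)) (fun _ => (1:ℝ)) hm1 hmone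
  simp only [mul_one, one_pow, integral_const, measure_univ, probReal_univ, ENNReal.toReal_one, smul_eq_mul, mul_one] at cs1
  have hA : (1:ℝ) ≤ (∫ ω, (φ₁ (Z ω)) ^ 2 ∂μ) / (∫ ω, φ₁ (Z ω) ∂μ) ^ 2 := by
    rw [le_div_iff₀ (by positivity)]
    linarith
  -- second term ≥ 1/E[Z²]
  have cs2 := cs_sq μ Z (fun ω => φ₂ (Z ω)) hmZ hm2
  have hB : 1 / ∫ ω, (Z ω) ^ 2 ∂μ ≤
      (∫ ω, (φ₂ (Z ω)) ^ 2 ∂μ) / (∫ ω, Z ω * φ₂ (Z ω) ∂μ) ^ 2 := by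
    rw [div_le_div_iff₀ hZ2pos (by positivity)]
    linarith
  linarith
end

section
/- (Theorem 2, location part; KKT sufficiency for problem P1.) Let f₀ be a nonnegative measurable function on (0, ∞) and ξ₁ > 0. Suppose ν* ∈ ℝ and ϑ₁* ≥ 0 are such that the function h*(z) = max(ν* − ϑ₁*/f₀(z), 0) on {z : f₀(z) > 0} (and h*(z) = 0 where f₀(z) = 0) satisfies: ∫₀^∞ h*(z) f₀(z) dz = 1, ∫₀^∞ h*(z) dz ≤ 2ξ₁, the complementary slackness condition ϑ₁*·(∫₀^∞ h*(z) dz − 2ξ₁) = 0, and ∫₀^∞ h*(z)² f₀(z) dz < ∞. Then for every measurable h : (0, ∞) → [0, ∞) with ∫₀^∞ h(z) f₀(z) dz = 1 and ∫₀^∞ h(z) dz ≤ 2ξ₁, one has ∫₀^∞ h(z)² f₀(z) dz ≥ ∫₀^∞ h*(z)² f₀(z) dz. -/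
open Real Set MeasureTheory

/-- Theorem 2, location part; KKT sufficiency for P1: let `f₀ ≥ 0` be
measurable on `(0,∞)`, `ξ₁ > 0`, `ν* ∈ ℝ`, `ϑ₁* ≥ 0`, and let
`h*(z) = max(ν* − ϑ₁*/f₀(z), 0)` where `f₀(z) > 0` (and `0` where `f₀(z) = 0`).
If `∫₀^∞ h* f₀ = 1`, `∫₀^∞ h* ≤ 2ξ₁`, complementary slackness
`ϑ₁*·(∫₀^∞ h* − 2ξ₁) = 0` holds, and `∫₀^∞ (h*)² f₀ < ∞`, then every measurable
nonnegative `h` with `∫₀^∞ h f₀ = 1` and `∫₀^∞ h ≤ 2ξ₁` satisfies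
`∫₀^∞ h² f₀ ≥ ∫₀^∞ (h*)² f₀`. -/
theorem stmt12 (f₀ : ℝ → ℝ) (hf₀m : Measurable f₀) (hf₀ : ∀ z ∈ Set.Ioi (0 : ℝ), 0 ≤ f₀ z)
    (ξ₁ : ℝ) (hξ₁ : 0 < ξ₁) (ν ϑ : ℝ) (hϑ : 0 ≤ ϑ)
    (hstar : ℝ → ℝ)
    (hstar_def : ∀ z, hstar z = if 0 < f₀ z then max (ν - ϑ / f₀ z) 0 else 0)
    (hnorm : (∫ z in Set.Ioi (0 : ℝ), hstar z * f₀ z) = 1)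
    (hbound : (∫⁻ z in Set.Ioi (0 : ℝ), ENNReal.ofReal (hstar z)) ≤ ENNReal.ofReal (2 * ξ₁))
    (hslack : ϑ = 0 ∨
      (∫⁻ z in Set.Ioi (0 : ℝ), ENNReal.ofReal (hstar z)) = ENNReal.ofReal (2 * ξ₁))
    (hfin : (∫⁻ z in Set.Ioi (0 : ℝ), ENNReal.ofReal ((hstar z) ^ 2 * f₀ z)) < ⊤) :
    ∀ h : ℝ → ℝ, Measurable h → (∀ z ∈ Set.Ioi (0 : ℝ), 0 ≤ h z) →
      (∫ z in Set.Ioi (0 : ℝ), h z * f₀ z) = 1 →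
      (∫⁻ z in Set.Ioi (0 : ℝ), ENNReal.ofReal (h z)) ≤ ENNReal.ofReal (2 * ξ₁) →
      (∫⁻ z in Set.Ioi (0 : ℝ), ENNReal.ofReal ((hstar z) ^ 2 * f₀ z)) ≤
        ∫⁻ z in Set.Ioi (0 : ℝ), ENNReal.ofReal ((h z) ^ 2 * f₀ z) := by
  intro h hmeas hpos hint hhb
  set μ := (volume : Measure ℝ).restrict (Set.Ioi 0) with hμ
  have hsm : Measurable hstar := by
    have he : hstar = fun z => if 0 < f₀ z then max (ν - ϑ / f₀ z) 0 else 0 :=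
      funext hstar_def
    rw [he]
    exact Measurable.ite (measurableSet_lt measurable_const hf₀m)
      ((measurable_const.sub (measurable_const.div hf₀m)).max measurable_const)
      measurable_const
  have hsnn : ∀ z, 0 ≤ hstar z := by
    intro z; rw [hstar_def]
    split
    · exact le_max_right _ _
    · exact le_refl 0
  by_cases htop : (∫⁻ z in Set.Ioi (0:ℝ), ENNReal.ofReal ((h z)^2 * f₀ z)) = ⊤
  · rw [htop]; exact le_top
  have hmem : ∀ᵐ z ∂μ, z ∈ Set.Ioi (0:ℝ) := ae_restrict_mem measurableSet_Ioi
  -- integrability facts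
  have int_of_lt : ∀ (g : ℝ → ℝ), Measurable g → (∀ᵐ z ∂μ, 0 ≤ g z) →
      (∫⁻ z, ENNReal.ofReal (g z) ∂μ) ≠ ⊤ → Integrable g μ := by
    intro g hg hgnn hlt
    refine ⟨hg.aestronglyMeasurable, ?_⟩
    rw [hasFiniteIntegral_iff_norm]
    have : (∫⁻ z, ENNReal.ofReal ‖g z‖ ∂μ) = ∫⁻ z, ENNReal.ofReal (g z) ∂μ := by
      refine lintegral_congr_ae ?_
      filter_upwards [hgnn] with z hz
      rw [Real.norm_of_nonneg hz]
    rw [this]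
    exact lt_top_iff_ne_top.mpr hlt
  have hnn_h : ∀ᵐ z ∂μ, 0 ≤ h z := by
    filter_upwards [hmem] with z hz using hpos z hz
  have hnn_f : ∀ᵐ z ∂μ, 0 ≤ f₀ z := by
    filter_upwards [hmem] with z hz using hf₀ z hz
  have int_h : Integrable h μ :=
    int_of_lt h hmeas hnn_h (ne_top_of_le_ne_top ENNReal.ofReal_ne_top hhb)
  have int_s : Integrable hstar μ :=
    int_of_lt hstar hsm (Filter.Eventually.of_forall hsnn)
      (ne_top_of_le_ne_top ENNReal.ofReal_ne_top hbound)
  have int_h2f : Integrable (fun z => h z ^ 2 * f₀ z) μ := by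
    refine int_of_lt _ ((hmeas.pow_const 2).mul hf₀m) ?_ htop
    filter_upwards [hnn_f] with z hz using mul_nonneg (sq_nonneg _) hz
  have int_s2f : Integrable (fun z => hstar z ^ 2 * f₀ z) μ := by
    refine int_of_lt _ ((hsm.pow_const 2).mul hf₀m) ?_ hfin.ne
    filter_upwards [hnn_f] with z hz using mul_nonneg (sq_nonneg _) hz
  have int_hf : Integrable (fun z => h z * f₀ z) μ := by
    by_contra hc
    rw [integral_undef hc] at hint
    exact one_ne_zero hint.symm
  have int_sf : Integrable (fun z => hstar z * f₀ z) μ := by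
    by_contra hc
    rw [integral_undef hc] at hnorm
    exact one_ne_zero hnorm.symm
  -- pointwise Lagrangian inequality
  have key : ∀ᵐ z ∂μ,
      hstar z ^ 2 * f₀ z - 2*ν*(hstar z * f₀ z) + 2*ϑ*(hstar z) ≤
      h z ^ 2 * f₀ z - 2*ν*(h z * f₀ z) + 2*ϑ*(h z) := by
    filter_upwards [hmem] with z hz
    have hfz := hf₀ z hz
    have hhz := hpos z hz
    rw [hstar_def]
    split_ifs with hpf
    · have hdiv : ϑ / f₀ z * f₀ z = ϑ := div_mul_cancel₀ ϑ (ne_of_gt hpf)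
      rcases le_total (ν - ϑ / f₀ z) 0 with hc | hc
      · rw [max_eq_right hc]
        have h1 : 0 ≤ h z * f₀ z * (-(ν - ϑ / f₀ z)) :=
          mul_nonneg (mul_nonneg hhz hfz) (neg_nonneg.mpr hc)
        nlinarith [mul_nonneg (sq_nonneg (h z)) hfz]
      · rw [max_eq_left hc]
        nlinarith [mul_nonneg (sq_nonneg (h z - (ν - ϑ / f₀ z))) hpf.le]
    · have h0 : f₀ z = 0 := le_antisymm (not_lt.mp hpf) hfz
      simp only [h0, mul_zero, zero_mul]
      nlinarith [mul_nonneg hϑ hhz]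
  -- integrate
  have intL_s : Integrable
      (fun z => hstar z ^ 2 * f₀ z - 2*ν*(hstar z * f₀ z) + 2*ϑ*(hstar z)) μ :=
    (int_s2f.sub (int_sf.const_mul _)).add (int_s.const_mul _)
  have intL_h : Integrable
      (fun z => h z ^ 2 * f₀ z - 2*ν*(h z * f₀ z) + 2*ϑ*(h z)) μ :=
    (int_h2f.sub (int_hf.const_mul _)).add (int_h.const_mul _)
  have hIle := integral_mono_ae intL_s intL_h key
  have iAs : Integrable (fun z => hstar z ^ 2 * f₀ z - 2*ν*(hstar z * f₀ z)) μ :=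
    int_s2f.sub (int_sf.const_mul _)
  have iAh : Integrable (fun z => h z ^ 2 * f₀ z - 2*ν*(h z * f₀ z)) μ :=
    int_h2f.sub (int_hf.const_mul _)
  rw [integral_add iAs (int_s.const_mul _),
      integral_add iAh (int_h.const_mul _),
      integral_sub int_s2f (int_sf.const_mul _),
      integral_sub int_h2f (int_hf.const_mul _),
      integral_const_mul, integral_const_mul, integral_const_mul,
      integral_const_mul] at hIle
  have hμint : (∫ z, hstar z * f₀ z ∂μ) = 1 := hnorm
  have hμint' : (∫ z, h z * f₀ z ∂μ) = 1 := hint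
  rw [hμint, hμint'] at hIle
  -- compare ϑ-terms
  have hrepr_h : (∫ z, h z ∂μ) = (∫⁻ z, ENNReal.ofReal (h z) ∂μ).toReal := by
    rw [integral_eq_lintegral_of_nonneg_ae hnn_h hmeas.aestronglyMeasurable]
  have hrepr_s : (∫ z, hstar z ∂μ) = (∫⁻ z, ENNReal.ofReal (hstar z) ∂μ).toReal := by
    rw [integral_eq_lintegral_of_nonneg_ae (Filter.Eventually.of_forall hsnn)
      hsm.aestronglyMeasurable]
  have hξnn : (0:ℝ) ≤ 2 * ξ₁ := by linarith
  have hϑterm : ϑ * (∫ z, h z ∂μ) ≤ ϑ * (∫ z, hstar z ∂μ) := by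
    rcases hslack with h0 | hs
    · simp [h0]
    · have h1 : (∫ z, hstar z ∂μ) = 2 * ξ₁ := by
        rw [hrepr_s, hs, ENNReal.toReal_ofReal hξnn]
      have h2 : (∫ z, h z ∂μ) ≤ 2 * ξ₁ := by
        rw [hrepr_h]
        calc (∫⁻ z, ENNReal.ofReal (h z) ∂μ).toReal
            ≤ (ENNReal.ofReal (2*ξ₁)).toReal :=
              ENNReal.toReal_mono ENNReal.ofReal_ne_top hhb
          _ = 2 * ξ₁ := ENNReal.toReal_ofReal hξnn
      rw [h1]
      exact mul_le_mul_of_nonneg_left h2 hϑ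
  have hfinal : (∫ z, hstar z ^ 2 * f₀ z ∂μ) ≤ ∫ z, h z ^ 2 * f₀ z ∂μ := by
    nlinarith [hIle, hϑterm]
  -- convert back to lintegrals
  have hnnS : ∀ᵐ z ∂μ, 0 ≤ hstar z ^ 2 * f₀ z := by
    filter_upwards [hnn_f] with z hz using mul_nonneg (sq_nonneg _) hz
  have hnnH : ∀ᵐ z ∂μ, 0 ≤ h z ^ 2 * f₀ z := by
    filter_upwards [hnn_f] with z hz using mul_nonneg (sq_nonneg _) hz
  have e1 : (∫⁻ z, ENNReal.ofReal (hstar z ^ 2 * f₀ z) ∂μ) =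
      ENNReal.ofReal (∫ z, hstar z ^ 2 * f₀ z ∂μ) :=
    (ofReal_integral_eq_lintegral_ofReal int_s2f hnnS).symm
  have e2 : (∫⁻ z, ENNReal.ofReal (h z ^ 2 * f₀ z) ∂μ) =
      ENNReal.ofReal (∫ z, h z ^ 2 * f₀ z ∂μ) :=
    (ofReal_integral_eq_lintegral_ofReal int_h2f hnnH).symm
  calc (∫⁻ z in Set.Ioi (0:ℝ), ENNReal.ofReal (hstar z ^ 2 * f₀ z)) =
        ENNReal.ofReal (∫ z, hstar z ^ 2 * f₀ z ∂μ) := e1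
    _ ≤ ENNReal.ofReal (∫ z, h z ^ 2 * f₀ z ∂μ) := ENNReal.ofReal_le_ofReal hfinal
    _ = _ := e2.symm
end

section
/- (Theorem 2, scale part; KKT sufficiency for problem P2.) Let f₀ be a nonnegative measurable function on (0, ∞), let F₀ : (0, ∞) → [0, 1] be nondecreasing with F₀'(z) = f₀(z) in the sense that F₀(z) = F₀(0⁺) + ∫₀^z f₀, and let ξ ≥ ξ₂ > 0. Suppose ν* ∈ ℝ, ϑ₁* ≥ 0, ϑ₂* ≥ 0 are such that the function g*(z) = max(ν*·z − (ϑ₂* + (ϑ₁* − ϑ₂*)·F₀(z))/f₀(z), 0) on {z : f₀(z) > 0} (and g*(z) = 0 where f₀(z) = 0) satisfies: ∫₀^∞ z·g*(z)·f₀(z) dz = 1, ∫₀^∞ g*(z)·F₀(z) dz ≤ 2ξ₂, ∫₀^∞ g*(z)·(1 − F₀(z)) dz ≤ 2ξ, the complementary slackness conditions ϑ₁*·(∫₀^∞ g* F₀ dz − 2ξ₂) = 0 and ϑ₂*·(∫₀^∞ g*(1 − F₀) dz − 2ξ) = 0, and ∫₀^∞ g*(z)² f₀(z) dz < ∞. Then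 for every measurable g : (0, ∞) → [0, ∞) with ∫₀^∞ z·g·f₀ dz = 1, ∫₀^∞ g·F₀ dz ≤ 2ξ₂, and ∫₀^∞ g·(1 − F₀) dz ≤ 2ξ, one has ∫₀^∞ g(z)² f₀(z) dz ≥ ∫₀^∞ g*(z)² f₀(z) dz. -/
open Real Set MeasureTheory


/-- Pointwise KKT inequality. -/
lemma stmt13_key (f F gs gv p q ϑ₁ ϑ₂ ν z : ℝ) (hf : 0 ≤ f) (hF0 : 0 ≤ F) (hF1 : F ≤ 1)
    (hg : 0 ≤ gv) (hϑ₁ : 0 ≤ ϑ₁) (hϑ₂ : 0 ≤ ϑ₂)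
    (hpq : p - q = ν)
    (hgs : gs = if 0 < f then max (ν * z - (ϑ₂ + (ϑ₁ - ϑ₂) * F) / f) 0 else 0) :
    gs ^ 2 * f + 2 * ϑ₁ * (gs * F) + 2 * ϑ₂ * (gs * (1 - F)) + 2 * p * (z * gv * f)
      + 2 * q * (z * gs * f)
    ≤ gv ^ 2 * f + 2 * ϑ₁ * (gv * F) + 2 * ϑ₂ * (gv * (1 - F)) + 2 * p * (z * gs * f)
      + 2 * q * (z * gv * f) := by
  subst hpq
  by_cases hf0 : 0 < f
  · rw [if_pos hf0] at hgs
    set a : ℝ := (p - q) * z - (ϑ₂ + (ϑ₁ - ϑ₂) * F) / f with ha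
    have hh : ϑ₂ + (ϑ₁ - ϑ₂) * F = ((p - q) * z - a) * f := by
      rw [ha]; field_simp; ring
    have h2 : 2 * ϑ₁ * (gv * F) + 2 * ϑ₂ * (gv * (1 - F))
        = 2 * gv * (((p - q) * z - a) * f) := by rw [← hh]; ring
    rcases le_or_gt a 0 with hA | hA
    · have hgs0 : gs = 0 := by rw [hgs]; exact max_eq_right hA
      rw [hgs0]
      nlinarith [mul_nonneg (mul_nonneg hg (neg_nonneg.2 hA)) hf0.le,
        mul_nonneg (mul_nonneg hg hg) hf0.le]
    · have hgsa : gs = a := by rw [hgs]; exact max_eq_left hA.le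
      have h3 : 2 * ϑ₁ * (gs * F) + 2 * ϑ₂ * (gs * (1 - F))
          = 2 * gs * (((p - q) * z - a) * f) := by rw [← hh]; ring
      rw [hgsa] at h3 ⊢
      nlinarith [mul_nonneg hf0.le (sq_nonneg (gv - a))]
  · have hf0' : f = 0 := le_antisymm (not_lt.1 hf0) hf
    have hgs0 : gs = 0 := by rw [hgs, if_neg hf0]
    rw [hgs0, hf0']
    nlinarith [mul_nonneg (mul_nonneg hϑ₁ hg) hF0,
      mul_nonneg (mul_nonneg hϑ₂ hg) (sub_nonneg.2 hF1)]

lemma stmt13_comb (c₁ c₂ c₃ c₄ t0 t1 t2 t3 t4 : ℝ)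
    (h0 : 0 ≤ t0) (h1 : 0 ≤ t1) (h2 : 0 ≤ t2) (h3 : 0 ≤ t3) (h4 : 0 ≤ t4)
    (hc₁ : 0 ≤ c₁) (hc₂ : 0 ≤ c₂) (hc₃ : 0 ≤ c₃) (hc₄ : 0 ≤ c₄) :
    ENNReal.ofReal t0 + ENNReal.ofReal c₁ * ENNReal.ofReal t1
      + ENNReal.ofReal c₂ * ENNReal.ofReal t2 + ENNReal.ofReal c₃ * ENNReal.ofReal t3
      + ENNReal.ofReal c₄ * ENNReal.ofReal t4
    = ENNReal.ofReal (t0 + c₁ * t1 + c₂ * t2 + c₃ * t3 + c₄ * t4) := by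
  rw [← ENNReal.ofReal_mul hc₁, ← ENNReal.ofReal_mul hc₂, ← ENNReal.ofReal_mul hc₃,
    ← ENNReal.ofReal_mul hc₄,
    ← ENNReal.ofReal_add h0 (mul_nonneg hc₁ h1),
    ← ENNReal.ofReal_add (add_nonneg h0 (mul_nonneg hc₁ h1)) (mul_nonneg hc₂ h2),
    ← ENNReal.ofReal_add (add_nonneg (add_nonneg h0 (mul_nonneg hc₁ h1)) (mul_nonneg hc₂ h2))
      (mul_nonneg hc₃ h3),
    ← ENNReal.ofReal_add (add_nonneg (add_nonneg (add_nonneg h0 (mul_nonneg hc₁ h1))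
      (mul_nonneg hc₂ h2)) (mul_nonneg hc₃ h3)) (mul_nonneg hc₄ h4)]

lemma stmt13_split (μ : Measure ℝ) (A B C D E : ℝ → ENNReal) (c₁ c₂ c₃ c₄ : ENNReal)
    (hc₁ : c₁ ≠ ⊤) (hc₂ : c₂ ≠ ⊤) (hc₃ : c₃ ≠ ⊤) (hc₄ : c₄ ≠ ⊤)
    (hB : AEMeasurable B μ) (hC : AEMeasurable C μ) (hD : AEMeasurable D μ)
    (hE : AEMeasurable E μ) :
    (∫⁻ z, (A z + c₁ * B z + c₂ * C z + c₃ * D z + c₄ * E z) ∂μ)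
      = (∫⁻ z, A z ∂μ) + c₁ * (∫⁻ z, B z ∂μ) + c₂ * (∫⁻ z, C z ∂μ)
        + c₃ * (∫⁻ z, D z ∂μ) + c₄ * (∫⁻ z, E z ∂μ) := by
  rw [lintegral_add_right' _ (hE.const_mul c₄), lintegral_add_right' _ (hD.const_mul c₃),
    lintegral_add_right' _ (hC.const_mul c₂), lintegral_add_right' _ (hB.const_mul c₁),
    lintegral_const_mul' c₁ _ hc₁, lintegral_const_mul' c₂ _ hc₂,
    lintegral_const_mul' c₃ _ hc₃, lintegral_const_mul' c₄ _ hc₄]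
/-- Theorem 2, scale part; KKT sufficiency for P2: let `f₀ ≥ 0` be measurable
on `(0,∞)`, `F₀ : (0,∞) → [0,1]` nondecreasing with `F₀(z) = F₀(0⁺) + ∫₀^z f₀`, and
`ξ ≥ ξ₂ > 0`.  With `ν* ∈ ℝ`, `ϑ₁* ≥ 0`, `ϑ₂* ≥ 0`, let
`g*(z) = max(ν*z − (ϑ₂* + (ϑ₁* − ϑ₂*)F₀(z))/f₀(z), 0)` where `f₀(z) > 0` (and `0` where
`f₀(z) = 0`).  If `∫₀^∞ z g* f₀ = 1`, `∫₀^∞ g* F₀ ≤ 2ξ₂`, `∫₀^∞ g*(1−F₀) ≤ 2ξ`, the two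
complementary slackness conditions hold, and `∫₀^∞ (g*)² f₀ < ∞`, then every measurable
nonnegative `g` with `∫₀^∞ z g f₀ = 1`, `∫₀^∞ g F₀ ≤ 2ξ₂`, `∫₀^∞ g(1−F₀) ≤ 2ξ` satisfies
`∫₀^∞ g² f₀ ≥ ∫₀^∞ (g*)² f₀`. -/
theorem stmt13 (f₀ : ℝ → ℝ) (hf₀m : Measurable f₀) (hf₀ : ∀ z ∈ Set.Ioi (0 : ℝ), 0 ≤ f₀ z)
    (F₀ : ℝ → ℝ) (hF₀mono : MonotoneOn F₀ (Set.Ioi 0))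
    (hF₀range : ∀ z ∈ Set.Ioi (0 : ℝ), F₀ z ∈ Set.Icc (0 : ℝ) 1)
    (hF₀der : ∃ c : ℝ, ∀ z ∈ Set.Ioi (0 : ℝ), F₀ z = c + ∫ t in Set.Ioc (0 : ℝ) z, f₀ t)
    (ξ ξ₂ : ℝ) (hξ₂ : 0 < ξ₂) (hξ : ξ₂ ≤ ξ)
    (ν ϑ₁ ϑ₂ : ℝ) (hϑ₁ : 0 ≤ ϑ₁) (hϑ₂ : 0 ≤ ϑ₂)
    (gstar : ℝ → ℝ)
    (gstar_def : ∀ z, gstar z =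
      if 0 < f₀ z then max (ν * z - (ϑ₂ + (ϑ₁ - ϑ₂) * F₀ z) / f₀ z) 0 else 0)
    (hnorm : (∫ z in Set.Ioi (0 : ℝ), z * gstar z * f₀ z) = 1)
    (hb1 : (∫⁻ z in Set.Ioi (0 : ℝ), ENNReal.ofReal (gstar z * F₀ z)) ≤
      ENNReal.ofReal (2 * ξ₂))
    (hb2 : (∫⁻ z in Set.Ioi (0 : ℝ), ENNReal.ofReal (gstar z * (1 - F₀ z))) ≤
      ENNReal.ofReal (2 * ξ))
    (hs1 : ϑ₁ = 0 ∨
      (∫⁻ z in Set.Ioi (0 : ℝ), ENNReal.ofReal (gstar z * F₀ z)) = ENNReal.ofReal (2 * ξ₂))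
    (hs2 : ϑ₂ = 0 ∨
      (∫⁻ z in Set.Ioi (0 : ℝ), ENNReal.ofReal (gstar z * (1 - F₀ z))) = ENNReal.ofReal (2 * ξ))
    (hfin : (∫⁻ z in Set.Ioi (0 : ℝ), ENNReal.ofReal ((gstar z) ^ 2 * f₀ z)) < ⊤) :
    ∀ g : ℝ → ℝ, Measurable g → (∀ z ∈ Set.Ioi (0 : ℝ), 0 ≤ g z) →
      (∫ z in Set.Ioi (0 : ℝ), z * g z * f₀ z) = 1 →
      (∫⁻ z in Set.Ioi (0 : ℝ), ENNReal.ofReal (g z * F₀ z)) ≤ ENNReal.ofReal (2 * ξ₂) →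
      (∫⁻ z in Set.Ioi (0 : ℝ), ENNReal.ofReal (g z * (1 - F₀ z))) ≤ ENNReal.ofReal (2 * ξ) →
      (∫⁻ z in Set.Ioi (0 : ℝ), ENNReal.ofReal ((gstar z) ^ 2 * f₀ z)) ≤
        ∫⁻ z in Set.Ioi (0 : ℝ), ENNReal.ofReal ((g z) ^ 2 * f₀ z) := by
  intro g hgm hgnn hgnorm hgb1 hgb2
  set μ := (volume : Measure ℝ).restrict (Set.Ioi 0) with hμ
  have hgsnn : ∀ z, 0 ≤ gstar z := by
    intro z; rw [gstar_def]
    split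
    · exact le_max_right _ _
    · exact le_refl 0
  set p := max ν 0 with hpdef
  set q := max (-ν) 0 with hqdef
  have hp : 0 ≤ p := le_max_right _ _
  have hq : 0 ≤ q := le_max_right _ _
  have hpq : p - q = ν := by
    rcases le_total 0 ν with h | h
    · rw [hpdef, hqdef, max_eq_left h, max_eq_right (neg_nonpos.mpr h), sub_zero]
    · rw [hpdef, hqdef, max_eq_right h, max_eq_left (neg_nonneg.mpr h), zero_sub, neg_neg]
  -- measurability
  have hSmeas : MeasurableSet {z : ℝ | 0 < f₀ z} := measurableSet_lt measurable_const hf₀m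
  have hF₀ae : AEMeasurable F₀ μ :=
    aemeasurable_restrict_of_monotoneOn measurableSet_Ioi hF₀mono
  have hgsae : AEMeasurable gstar μ := by
    have hind : gstar = Set.indicator {z : ℝ | 0 < f₀ z}
        (fun z => max (ν * z - (ϑ₂ + (ϑ₁ - ϑ₂) * F₀ z) / f₀ z) 0) := by
      funext z; rw [gstar_def]
      by_cases h : 0 < f₀ z
      · simp [Set.indicator_apply, Set.mem_setOf_eq, h]
      · simp [Set.indicator_apply, Set.mem_setOf_eq, h]
    rw [hind]
    exact ((((measurable_id.const_mul ν).aemeasurable).sub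
      ((aemeasurable_const.add (hF₀ae.const_mul _)).div hf₀m.aemeasurable)).max
      aemeasurable_const).indicator hSmeas
  -- nonnegativity a.e.
  have haeg : 0 ≤ᵐ[μ] fun z => z * g z * f₀ z := by
    filter_upwards [ae_restrict_mem measurableSet_Ioi] with z hz
    exact mul_nonneg (mul_nonneg (le_of_lt hz) (hgnn z hz)) (hf₀ z hz)
  have haegs : 0 ≤ᵐ[μ] fun z => z * gstar z * f₀ z := by
    filter_upwards [ae_restrict_mem measurableSet_Ioi] with z hz
    exact mul_nonneg (mul_nonneg (le_of_lt hz) (hgsnn z)) (hf₀ z hz)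
  -- integrability of normalization integrands
  have hIg : Integrable (fun z => z * g z * f₀ z) μ := by
    by_contra h
    rw [integral_undef h] at hgnorm; exact one_ne_zero hgnorm.symm
  have hIgs : Integrable (fun z => z * gstar z * f₀ z) μ := by
    by_contra h
    rw [integral_undef h] at hnorm; exact one_ne_zero hnorm.symm
  have hDg : (∫⁻ z, ENNReal.ofReal (z * g z * f₀ z) ∂μ) = ENNReal.ofReal 1 := by
    rw [← hgnorm]; exact (ofReal_integral_eq_lintegral_ofReal hIg haeg).symm
  have hDgs : (∫⁻ z, ENNReal.ofReal (z * gstar z * f₀ z) ∂μ) = ENNReal.ofReal 1 := by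
    rw [← hnorm]; exact (ofReal_integral_eq_lintegral_ofReal hIgs haegs).symm
  -- coefficient nonnegativity
  have hc1 : (0:ℝ) ≤ 2 * ϑ₁ := by linarith
  have hc2 : (0:ℝ) ≤ 2 * ϑ₂ := by linarith
  have hc3 : (0:ℝ) ≤ 2 * p := by linarith
  have hc4 : (0:ℝ) ≤ 2 * q := by linarith
  -- pointwise inequality in ENNReal
  have hpt : ∀ᵐ z ∂μ,
      ENNReal.ofReal (gstar z ^ 2 * f₀ z)
        + ENNReal.ofReal (2 * ϑ₁) * ENNReal.ofReal (gstar z * F₀ z)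
        + ENNReal.ofReal (2 * ϑ₂) * ENNReal.ofReal (gstar z * (1 - F₀ z))
        + ENNReal.ofReal (2 * p) * ENNReal.ofReal (z * g z * f₀ z)
        + ENNReal.ofReal (2 * q) * ENNReal.ofReal (z * gstar z * f₀ z)
      ≤ ENNReal.ofReal (g z ^ 2 * f₀ z)
        + ENNReal.ofReal (2 * ϑ₁) * ENNReal.ofReal (g z * F₀ z)
        + ENNReal.ofReal (2 * ϑ₂) * ENNReal.ofReal (g z * (1 - F₀ z))
        + ENNReal.ofReal (2 * p) * ENNReal.ofReal (z * gstar z * f₀ z)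
        + ENNReal.ofReal (2 * q) * ENNReal.ofReal (z * g z * f₀ z) := by
    filter_upwards [ae_restrict_mem measurableSet_Ioi] with z hz
    have hzpos : (0:ℝ) < z := hz
    obtain ⟨hF0, hF1⟩ := hF₀range z hz
    have hfz := hf₀ z hz
    have hgz := hgnn z hz
    have hgsz := hgsnn z
    rw [stmt13_comb _ _ _ _ _ _ _ _ _ (mul_nonneg (sq_nonneg _) hfz)
        (mul_nonneg hgsz hF0) (mul_nonneg hgsz (sub_nonneg.2 hF1))
        (mul_nonneg (mul_nonneg hzpos.le hgz) hfz)
        (mul_nonneg (mul_nonneg hzpos.le hgsz) hfz) hc1 hc2 hc3 hc4,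
      stmt13_comb _ _ _ _ _ _ _ _ _ (mul_nonneg (sq_nonneg _) hfz)
        (mul_nonneg hgz hF0) (mul_nonneg hgz (sub_nonneg.2 hF1))
        (mul_nonneg (mul_nonneg hzpos.le hgsz) hfz)
        (mul_nonneg (mul_nonneg hzpos.le hgz) hfz) hc1 hc2 hc3 hc4]
    exact ENNReal.ofReal_le_ofReal
      (stmt13_key (f₀ z) (F₀ z) (gstar z) (g z) p q ϑ₁ ϑ₂ ν z hfz hF0 hF1 hgz hϑ₁ hϑ₂
        hpq (gstar_def z))
  have hInt := lintegral_mono_ae hpt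
  -- measurability of the pieces
  have mBs : AEMeasurable (fun z => ENNReal.ofReal (gstar z * F₀ z)) μ :=
    ENNReal.measurable_ofReal.comp_aemeasurable (hgsae.mul hF₀ae)
  have mCs : AEMeasurable (fun z => ENNReal.ofReal (gstar z * (1 - F₀ z))) μ :=
    ENNReal.measurable_ofReal.comp_aemeasurable
      (hgsae.mul (aemeasurable_const.sub hF₀ae))
  have mB : AEMeasurable (fun z => ENNReal.ofReal (g z * F₀ z)) μ :=
    ENNReal.measurable_ofReal.comp_aemeasurable (hgm.aemeasurable.mul hF₀ae)
  have mC : AEMeasurable (fun z => ENNReal.ofReal (g z * (1 - F₀ z))) μ :=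
    ENNReal.measurable_ofReal.comp_aemeasurable
      (hgm.aemeasurable.mul (aemeasurable_const.sub hF₀ae))
  have mDg : AEMeasurable (fun z => ENNReal.ofReal (z * g z * f₀ z)) μ :=
    ENNReal.measurable_ofReal.comp_aemeasurable
      (((measurable_id.mul hgm).mul hf₀m).aemeasurable)
  have mDgs : AEMeasurable (fun z => ENNReal.ofReal (z * gstar z * f₀ z)) μ :=
    ENNReal.measurable_ofReal.comp_aemeasurable
      ((aemeasurable_id.mul hgsae).mul hf₀m.aemeasurable)
  have hL := stmt13_split μ (fun z => ENNReal.ofReal (gstar z ^ 2 * f₀ z))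
    (fun z => ENNReal.ofReal (gstar z * F₀ z))
    (fun z => ENNReal.ofReal (gstar z * (1 - F₀ z)))
    (fun z => ENNReal.ofReal (z * g z * f₀ z))
    (fun z => ENNReal.ofReal (z * gstar z * f₀ z))
    (ENNReal.ofReal (2 * ϑ₁)) (ENNReal.ofReal (2 * ϑ₂))
    (ENNReal.ofReal (2 * p)) (ENNReal.ofReal (2 * q))
    ENNReal.ofReal_ne_top ENNReal.ofReal_ne_top ENNReal.ofReal_ne_top ENNReal.ofReal_ne_top
    mBs mCs mDg mDgs
  have hR := stmt13_split μ (fun z => ENNReal.ofReal (g z ^ 2 * f₀ z))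
    (fun z => ENNReal.ofReal (g z * F₀ z))
    (fun z => ENNReal.ofReal (g z * (1 - F₀ z)))
    (fun z => ENNReal.ofReal (z * gstar z * f₀ z))
    (fun z => ENNReal.ofReal (z * g z * f₀ z))
    (ENNReal.ofReal (2 * ϑ₁)) (ENNReal.ofReal (2 * ϑ₂))
    (ENNReal.ofReal (2 * p)) (ENNReal.ofReal (2 * q))
    ENNReal.ofReal_ne_top ENNReal.ofReal_ne_top ENNReal.ofReal_ne_top ENNReal.ofReal_ne_top
    mB mC mDgs mDg
  rw [hDg, hDgs] at hL hR
  rw [hL, hR] at hInt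
  -- complementary slackness comparisons
  have hmono1 : ENNReal.ofReal (2 * ϑ₁) * (∫⁻ z, ENNReal.ofReal (g z * F₀ z) ∂μ)
      ≤ ENNReal.ofReal (2 * ϑ₁) * (∫⁻ z, ENNReal.ofReal (gstar z * F₀ z) ∂μ) := by
    rcases hs1 with h | h
    · simp [h]
    · rw [h]; exact mul_le_mul_right hgb1 _
  have hmono2 : ENNReal.ofReal (2 * ϑ₂) * (∫⁻ z, ENNReal.ofReal (g z * (1 - F₀ z)) ∂μ)
      ≤ ENNReal.ofReal (2 * ϑ₂) * (∫⁻ z, ENNReal.ofReal (gstar z * (1 - F₀ z)) ∂μ) := by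
    rcases hs2 with h | h
    · simp [h]
    · rw [h]; exact mul_le_mul_right hgb2 _
  have hchain : (∫⁻ z, ENNReal.ofReal (gstar z ^ 2 * f₀ z) ∂μ)
        + ENNReal.ofReal (2 * ϑ₁) * (∫⁻ z, ENNReal.ofReal (g z * F₀ z) ∂μ)
        + ENNReal.ofReal (2 * ϑ₂) * (∫⁻ z, ENNReal.ofReal (g z * (1 - F₀ z)) ∂μ)
        + ENNReal.ofReal (2 * p) * ENNReal.ofReal 1
        + ENNReal.ofReal (2 * q) * ENNReal.ofReal 1
      ≤ (∫⁻ z, ENNReal.ofReal (g z ^ 2 * f₀ z) ∂μ)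
        + ENNReal.ofReal (2 * ϑ₁) * (∫⁻ z, ENNReal.ofReal (g z * F₀ z) ∂μ)
        + ENNReal.ofReal (2 * ϑ₂) * (∫⁻ z, ENNReal.ofReal (g z * (1 - F₀ z)) ∂μ)
        + ENNReal.ofReal (2 * p) * ENNReal.ofReal 1
        + ENNReal.ofReal (2 * q) * ENNReal.ofReal 1 :=
    le_trans (add_le_add (add_le_add (add_le_add (add_le_add le_rfl hmono1) hmono2)
      le_rfl) le_rfl) hInt
  rw [add_assoc, add_assoc, add_assoc, add_assoc, add_assoc, add_assoc] at hchain
  have hKne : ENNReal.ofReal (2 * ϑ₁) * (∫⁻ z, ENNReal.ofReal (g z * F₀ z) ∂μ)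
      + (ENNReal.ofReal (2 * ϑ₂) * (∫⁻ z, ENNReal.ofReal (g z * (1 - F₀ z)) ∂μ)
      + (ENNReal.ofReal (2 * p) * ENNReal.ofReal 1
      + ENNReal.ofReal (2 * q) * ENNReal.ofReal 1)) ≠ ⊤ := by
    have h1 : ENNReal.ofReal (2 * ϑ₁) * (∫⁻ z, ENNReal.ofReal (g z * F₀ z) ∂μ) < ⊤ :=
      ENNReal.mul_lt_top ENNReal.ofReal_lt_top (lt_of_le_of_lt hgb1 ENNReal.ofReal_lt_top)
    have h2 : ENNReal.ofReal (2 * ϑ₂) * (∫⁻ z, ENNReal.ofReal (g z * (1 - F₀ z)) ∂μ) < ⊤ :=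
      ENNReal.mul_lt_top ENNReal.ofReal_lt_top (lt_of_le_of_lt hgb2 ENNReal.ofReal_lt_top)
    have h3 : ENNReal.ofReal (2 * p) * ENNReal.ofReal 1 < ⊤ :=
      ENNReal.mul_lt_top ENNReal.ofReal_lt_top ENNReal.ofReal_lt_top
    have h4 : ENNReal.ofReal (2 * q) * ENNReal.ofReal 1 < ⊤ :=
      ENNReal.mul_lt_top ENNReal.ofReal_lt_top ENNReal.ofReal_lt_top
    exact (ENNReal.add_lt_top.mpr ⟨h1, ENNReal.add_lt_top.mpr ⟨h2,
      ENNReal.add_lt_top.mpr ⟨h3, h4⟩⟩⟩).ne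
  exact (ENNReal.add_le_add_iff_right hKne).mp hchain
end
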